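/- Let k be a field of characteristic zero, V a nonzero finite-dimensional k-vector space, and ψ a nondegenerate alternating bilinear form on V. Let 𝔏 be a Lie subalgebra of the Lie algebra of endomorphisms of V. Assume: (i) V is a simple 𝔏-module (no k-subspace of V other than 0 and V is stable under every element of 𝔏); (ii) there is a subset D ⊆ V such that 𝔏 is generated as a Lie algebra by the endomorphisms N_δ for δ ∈ D, and each such N_δ lies in 𝔰𝔭(V, ψ). Then 𝔏 = 𝔰𝔭(V, ψ). -/

import Mathlib

/-- For a bilinear form `ψ` on `V` and `δ ∈ V`, the endomorphism `N_δ : x ↦ ψ(x, δ) δ`. -/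
noncomputable def vanishingCycleEndo {k V : Type*} [Field k] [AddCommGroup V] [Module k V]
    (ψ : LinearMap.BilinForm k V) (δ : V) : Module.End k V :=
  LinearMap.smulRight (ψ.flip δ) δ

attribute [local instance 100] LieRing.ofAssociativeRing

namespace Weil511

variable {k V : Type*} [Field k] [AddCommGroup V] [Module k V]

/-- The symmetrized rank-two endomorphism `x ↦ ψ(x,v) u + ψ(x,u) v`. -/
noncomputable def symEndo (ψ : LinearMap.BilinForm k V) (u v : V) : Module.End k V :=
  LinearMap.smulRight (ψ.flip v) u + LinearMap.smulRight (ψ.flip u) v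

variable (ψ : LinearMap.BilinForm k V)

@[simp] lemma vce_apply (δ x : V) : vanishingCycleEndo ψ δ x = ψ x δ • δ := by
  simp [vanishingCycleEndo]

@[simp] lemma symEndo_apply (u v x : V) : symEndo ψ u v x = ψ x v • u + ψ x u • v := by
  simp [symEndo]

lemma symEndo_comm (u v : V) : symEndo ψ u v = symEndo ψ v u := by
  ext x; simp [add_comm]

lemma symEndo_add_left (u w c : V) :
    symEndo ψ (u + w) c = symEndo ψ u c + symEndo ψ w c := by
  ext x; simp; module

lemma symEndo_smul_left (t : k) (u c : V) :
    symEndo ψ (t • u) c = t • symEndo ψ u c := by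
  ext x; simp; module

lemma symEndo_zero_left (c : V) : symEndo ψ 0 c = 0 := by
  ext x; simp

lemma symEndo_self (a : V) : symEndo ψ a a = (2 : k) • vanishingCycleEndo ψ a := by
  ext x; simp; module

lemma lie_vce_vce (halt : ψ.IsAlt) (a b : V) :
    ⁅vanishingCycleEndo ψ a, vanishingCycleEndo ψ b⁆ = ψ b a • symEndo ψ a b := by
  ext x
  have h : ψ a b = -ψ b a := (LinearMap.IsAlt.neg halt b a).symm
  simp [Ring.lie_def, Module.End.mul_apply, h]
  module

lemma lie_symEndo_vce (halt : ψ.IsAlt) (u v a : V) :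
    ⁅symEndo ψ u v, vanishingCycleEndo ψ a⁆
      = ψ a v • symEndo ψ u a + ψ a u • symEndo ψ v a := by
  ext x
  have h1 : ψ u a = -ψ a u := (LinearMap.IsAlt.neg halt a u).symm
  have h2 : ψ v a = -ψ a v := (LinearMap.IsAlt.neg halt a v).symm
  simp [Ring.lie_def, Module.End.mul_apply, h1, h2]
  module

/-- The stabilizer of a submodule, as a Lie subalgebra of endomorphisms. -/
def stab (W : Submodule k V) : LieSubalgebra k (Module.End k V) where
  carrier := {f | ∀ x ∈ W, f x ∈ W}
  add_mem' := fun {f g} hf hg x hx => by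
    simpa using W.add_mem (hf x hx) (hg x hx)
  zero_mem' := fun x hx => by simpa using W.zero_mem
  smul_mem' := fun c f hf x hx => by simpa using W.smul_mem c (hf x hx)
  lie_mem' := fun {f g} hf hg x hx => by
    have : (⁅f, g⁆ : Module.End k V) x = f (g x) - g (f x) := by
      simp [Ring.lie_def, Module.End.mul_apply]
    rw [this]
    exact W.sub_mem (hf _ (hg _ hx)) (hg _ (hf _ hx))

@[simp] lemma mem_stab (W : Submodule k V) (f : Module.End k V) :
    f ∈ stab W ↔ ∀ x ∈ W, f x ∈ W := Iff.rfl

end Weil511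

open Weil511

/-- Lemma (5.11) of Deligne's Weil I: if `V` is a nonzero finite-dimensional vector space
over a field `k` of characteristic zero with a nondegenerate alternating form `ψ`, and a
Lie subalgebra `𝔏 ⊆ End(V)` acts irreducibly on `V` and is generated by endomorphisms of
the form `N_δ : x ↦ ψ(x, δ) δ` (each lying in `𝔰𝔭(V, ψ)`), then `𝔏 = 𝔰𝔭(V, ψ)`. -/
theorem lieSubalgebra_eq_symplectic_of_generated_by_vanishing_cycles
    {k V : Type*} [Field k] [CharZero k] [AddCommGroup V] [Module k V]
    [FiniteDimensional k V] [Nontrivial V]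
    (ψ : LinearMap.BilinForm k V) (hnd : ψ.Nondegenerate) (halt : ψ.IsAlt)
    (L : LieSubalgebra k (Module.End k V))
    (hsimple : ∀ W : Submodule k V, (∀ f ∈ L, ∀ x ∈ W, f x ∈ W) → W = ⊥ ∨ W = ⊤)
    (D : Set V)
    (hmem : ∀ δ ∈ D, vanishingCycleEndo ψ δ ∈ skewAdjointLieSubalgebra ψ)
    (hgen : L = LieSubalgebra.lieSpan k (Module.End k V) (vanishingCycleEndo ψ '' D)) :
    L = skewAdjointLieSubalgebra ψ := by
  classical
  have hNL : ∀ δ ∈ D, vanishingCycleEndo ψ δ ∈ L := fun δ hδ => by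
    rw [hgen]; exact LieSubalgebra.subset_lieSpan ⟨δ, hδ, rfl⟩
  -- Step 1: there is a nonzero element of D.
  have hD : ∃ δ₀ ∈ D, δ₀ ≠ (0 : V) := by
    by_contra h
    push_neg at h
    have hL0 : ∀ f ∈ L, f = (0 : Module.End k V) := by
      intro f hf
      rw [hgen] at hf
      have hle : LieSubalgebra.lieSpan k (Module.End k V) (vanishingCycleEndo ψ '' D)
          ≤ (⊥ : LieSubalgebra k (Module.End k V)) := by
        apply LieSubalgebra.lieSpan_le.mpr
        rintro _ ⟨δ, hδ, rfl⟩
        have : δ = 0 := h δ hδ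
        subst this
        have : vanishingCycleEndo ψ (0 : V) = 0 := by ext x; simp
        rw [this]
        exact (⊥ : LieSubalgebra k (Module.End k V)).zero_mem
      simpa [LieSubalgebra.mem_bot] using hle hf
    obtain ⟨x, hx⟩ := exists_ne (0 : V)
    have hW := hsimple (Submodule.span k {x}) (by
      intro f hf y hy
      rw [hL0 f hf]
      simpa using (Submodule.span k {x}).zero_mem)
    have htop : Submodule.span k {x} = ⊤ := by
      rcases hW with h1 | h1
      · exact absurd (Submodule.span_eq_bot.mp h1 x rfl) hx
      · exact h1
    apply hx
    apply hnd.1 x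
    intro y
    have hy : y ∈ Submodule.span k ({x} : Set V) := by rw [htop]; trivial
    obtain ⟨c, rfl⟩ := Submodule.mem_span_singleton.mp hy
    simp [halt x]
  obtain ⟨δ₀, hδ₀D, hδ₀⟩ := hD
  -- Step 2: connectivity.
  set R : V → V → Prop := fun a b => a ∈ D ∧ b ∈ D ∧ ψ a b ≠ 0 with hR
  have hRsymm : Symmetric R := by
    rintro a b ⟨ha, hb, hab⟩
    refine ⟨hb, ha, ?_⟩
    rw [← LinearMap.IsAlt.neg halt a b]
    simpa using hab
  set C : Set V := {δ | δ ∈ D ∧ Relation.ReflTransGen R δ₀ δ} with hC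
  have hchain : ∀ a b : V, a ∈ D → Relation.ReflTransGen R a b → symEndo ψ a b ∈ L := by
    intro a b haD h
    induction h with
    | refl =>
      rw [symEndo_self]
      exact L.smul_mem _ (hNL a haD)
    | @tail c b h hcb ih =>
      obtain ⟨hcD, hbD, hψcb⟩ := hcb
      have hbc : ψ b c ≠ 0 := by rw [← LinearMap.IsAlt.neg halt c b]; simpa using hψcb
      have hScb : symEndo ψ c b ∈ L := by
        have hl := lie_vce_vce ψ halt c b
        have hm := L.lie_mem (hNL c hcD) (hNL b hbD)
        rw [hl] at hm
        have := L.smul_mem (ψ b c)⁻¹ hm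
        rwa [smul_smul, inv_mul_cancel₀ hbc, one_smul] at this
      have h3 := lie_symEndo_vce ψ halt a c b
      have hm3 := L.lie_mem ih (hNL b hbD)
      rw [h3] at hm3
      have hx : ψ b c • symEndo ψ a b ∈ L := by
        have := L.sub_mem hm3 (L.smul_mem (ψ b a) hScb)
        simpa using this
      have := L.smul_mem (ψ b c)⁻¹ hx
      rwa [smul_smul, inv_mul_cancel₀ hbc, one_smul] at this
  have hpair : ∀ a ∈ C, ∀ b ∈ C, symEndo ψ a b ∈ L := by
    rintro a ⟨haD, hpa⟩ b ⟨hbD, hpb⟩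
    exact hchain a b haD
      (((haveI : Std.Symm R := ⟨fun _ _ h => hRsymm h⟩; Std.Symm.symm _ _ hpa : Relation.ReflTransGen R a δ₀)).trans hpb)
  -- Step 3: span of C is all of V.
  have hstabC : ∀ f ∈ L, ∀ x ∈ Submodule.span k C, f x ∈ Submodule.span k C := by
    have hle : L ≤ stab (Submodule.span k C) := by
      rw [hgen]
      apply LieSubalgebra.lieSpan_le.mpr
      rintro _ ⟨δ, hδD, rfl⟩
      intro x hx
      by_cases hc : Relation.ReflTransGen R δ₀ δ
      · rw [vce_apply]
        exact (Submodule.span k C).smul_mem _ (Submodule.subset_span ⟨hδD, hc⟩)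
      · have hx0 : ψ x δ = 0 := by
          have hCperp : C ⊆ (LinearMap.ker (ψ.flip δ) : Set V) := by
            rintro c ⟨hcD, hpc⟩
            by_contra hcm
            have hψ : ψ c δ ≠ 0 := by simpa [LinearMap.mem_ker] using hcm
            exact hc (hpc.tail ⟨hcD, hδD, hψ⟩)
          have := Submodule.span_le.mpr hCperp hx
          simpa [LinearMap.mem_ker] using this
        rw [vce_apply, hx0, zero_smul]
        exact (Submodule.span k C).zero_mem
    intro f hf
    exact hle hf
  have hspanC : Submodule.span k C = ⊤ := by
    rcases hsimple (Submodule.span k C) hstabC with h1 | h1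
    · exfalso
      have : δ₀ ∈ Submodule.span k C := Submodule.subset_span ⟨hδ₀D, .refl⟩
      rw [h1] at this
      exact hδ₀ ((Submodule.mem_bot k).mp this)
    · exact h1
  -- Step 4: all symEndo's lie in L.
  have hM1 : ∀ v : V, ∀ c ∈ C, symEndo ψ v c ∈ L := by
    let M1 : Submodule k V :=
      { carrier := {v | ∀ c ∈ C, symEndo ψ v c ∈ L}
        add_mem' := fun {u w} hu hw c hc => by
          rw [symEndo_add_left]; exact L.add_mem (hu c hc) (hw c hc)
        zero_mem' := fun c hc => by rw [symEndo_zero_left]; exact L.zero_mem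
        smul_mem' := fun t v hv c hc => by
          rw [symEndo_smul_left]; exact L.smul_mem t (hv c hc) }
    have hle : Submodule.span k C ≤ M1 := Submodule.span_le.mpr (fun a ha c hc => hpair a ha c hc)
    intro v
    exact hle (by rw [hspanC]; trivial)
  have key : ∀ u v : V, symEndo ψ u v ∈ L := by
    intro u v
    let M2 : Submodule k V :=
      { carrier := {w | symEndo ψ u w ∈ L}
        add_mem' := fun {a b} ha hb => by
          have ha1 : symEndo ψ u a ∈ L := ha
          have hb1 : symEndo ψ u b ∈ L := hb
          have ha' : symEndo ψ a u ∈ L := by rwa [symEndo_comm ψ u a] at ha1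
          have hb' : symEndo ψ b u ∈ L := by rwa [symEndo_comm ψ u b] at hb1
          show symEndo ψ u (a + b) ∈ L
          rw [symEndo_comm ψ u (a + b), symEndo_add_left]
          exact L.add_mem ha' hb'
        zero_mem' := by
          show symEndo ψ u (0 : V) ∈ L
          rw [symEndo_comm ψ u (0 : V), symEndo_zero_left]; exact L.zero_mem
        smul_mem' := fun t w hw => by
          have hw1 : symEndo ψ u w ∈ L := hw
          have hw' : symEndo ψ w u ∈ L := by rwa [symEndo_comm ψ u w] at hw1
          show symEndo ψ u (t • w) ∈ L
          rw [symEndo_comm ψ u (t • w), symEndo_smul_left]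
          exact L.smul_mem t hw' }
    have hle : Submodule.span k C ≤ M2 := Submodule.span_le.mpr
      (fun c hc => by
        show symEndo ψ u c ∈ L
        exact hM1 u c hc)
    exact hle (show v ∈ Submodule.span k C by rw [hspanC]; trivial)
  -- Step 5: conclude.
  apply le_antisymm
  · rw [hgen]
    exact LieSubalgebra.lieSpan_le.mpr (by rintro _ ⟨δ, hδ, rfl⟩; exact hmem δ hδ)
  · intro f hf
    have hsk : ∀ x y : V, ψ (f x) y = -ψ x (f y) := by
      have h1 : ψ.IsSkewAdjoint f := (LinearMap.mem_skewAdjointSubmodule (B := ψ) f).mp hf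
      intro x y
      have h2 : ∀ x y, ψ (f x) y = ψ x ((-f) y) := h1
      simpa using h2 x y
    set n := Module.finrank k V with hn
    set b : Module.Basis (Fin n) k V := Module.finBasis k V with hb
    set d : Module.Basis (Fin n) k V := ψ.dualBasis hnd b with hd
    have hrepr : ∀ y : V, ∑ i, ψ y (b i) • d i = y := by
      intro y
      conv_rhs => rw [← d.sum_repr y]
      refine Finset.sum_congr rfl (fun i _ => ?_)
      rw [hd, LinearMap.BilinForm.dualBasis_repr_apply]
    have hdb : ∀ (i : Fin n) (x : V), ψ (d i) x = b.repr x i := by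
      intro i x
      conv_lhs => rw [← b.sum_repr x]
      rw [map_sum]
      have : ∀ j : Fin n, ψ (d i) (b.repr x j • b j) = if j = i then b.repr x j else 0 := by
        intro j
        rw [map_smul, hd, LinearMap.BilinForm.apply_dualBasis_left]
        by_cases h : j = i <;> simp [h]
      rw [Finset.sum_congr rfl (fun j _ => this j)]
      simp
    have hsum : ∑ i, symEndo ψ (f (b i)) (d i) = (-2 : k) • f := by
      ext x
      have happ : ∀ i : Fin n,
          (symEndo ψ (f (b i)) (d i)) x = ψ x (d i) • f (b i) + ψ x (f (b i)) • d i := by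
        intro i; rw [symEndo_apply]
      rw [LinearMap.sum_apply]
      rw [Finset.sum_congr rfl (fun i _ => happ i)]
      rw [Finset.sum_add_distrib]
      have h1 : ∑ i, ψ x (d i) • f (b i) = -f x := by
        have : ∀ i : Fin n, ψ x (d i) • f (b i) = -(b.repr x i • f (b i)) := by
          intro i
          rw [← LinearMap.IsAlt.neg halt (d i) x, hdb i x, neg_smul]
        rw [Finset.sum_congr rfl (fun i _ => this i), Finset.sum_neg_distrib]
        congr 1
        have : ∑ i, b.repr x i • f (b i) = f (∑ i, b.repr x i • b i) := by
          rw [map_sum]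
          exact Finset.sum_congr rfl (fun i _ => by rw [map_smul])
        rw [this, b.sum_repr]
      have h2 : ∑ i, ψ x (f (b i)) • d i = -f x := by
        have : ∀ i : Fin n, ψ x (f (b i)) • d i = -(ψ (f x) (b i) • d i) := by
          intro i
          have := hsk x (b i)
          have h' : ψ x (f (b i)) = -ψ (f x) (b i) := by
            rw [this]; ring
          rw [h', neg_smul]
        rw [Finset.sum_congr rfl (fun i _ => this i), Finset.sum_neg_distrib]
        rw [hrepr (f x)]
      rw [h1, h2]
      simp
      module
    have hSL : (∑ i, symEndo ψ (f (b i)) (d i)) ∈ L := by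
      apply Submodule.sum_mem
      intro i _
      exact key (f (b i)) (d i)
    rw [hsum] at hSL
    have := L.smul_mem (-2 : k)⁻¹ hSL
    rwa [smul_smul, inv_mul_cancel₀ (by norm_num : (-2 : k) ≠ 0), one_smul] at this
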